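/- Theorem 2: An encoding map M : F_q^{nK} → F_q^L is a δ-error-correcting functional index code for the FICP F(X,R) (i.e., there exist decoding functions D_i with D_i(M(x) + ε, H_i(x)) = W_i(x) for all i ∈ [N], all x ∈ F_q^{nK}, and all error vectors ε ∈ F_q^L with Hamming weight wt(ε) ≤ δ) if and only if for every confusable pair x, x' ∈ F_q^{nK}, the Hamming weight of M(x) − M(x') is at least 2δ + 1. -/

import Mathlib

/-- Theorem 2: an encoding map `M` is a `δ`-error-correcting functional index code iff the
Hamming weight of `M x - M x'` is at least `2δ + 1` for every confusable pair `x, x'`. -/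
theorem stmt_12 {F : Type*} [Field F] [Fintype F] [DecidableEq F]
    (n K N L δ : ℕ) (hsz wsz : Fin N → ℕ)
    (H : ∀ i, Fin (hsz i) → (Fin (n * K) → F) → Fin n → F)
    (W : ∀ i, Fin (wsz i) → (Fin (n * K) → F) → Fin n → F)
    (M : (Fin (n * K) → F) → Fin L → F) :
    (∃ D : ∀ i, (Fin L → F) → (Fin (hsz i) → Fin n → F) → Fin (wsz i) → Fin n → F,
        ∀ (i : Fin N) (x : Fin (n * K) → F) (ε : Fin L → F), hammingNorm ε ≤ δ →
          D i (M x + ε) (fun j => H i j x) = fun l => W i l x)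
    ↔ (∀ x x' : Fin (n * K) → F, x ≠ x' →
        (∃ i, (∀ j, H i j x = H i j x') ∧ ∃ l, W i l x ≠ W i l x') →
        2 * δ + 1 ≤ hammingNorm (M x - M x')) := by
  constructor
  · rintro ⟨D, hD⟩ x x' _hne ⟨i, hH, l, hW⟩
    by_contra hlt
    push_neg at hlt
    have hscard : ({k | (M x - M x') k ≠ 0} : Finset (Fin L)).card ≤ 2 * δ := by
      have : hammingNorm (M x - M x') = ({k | (M x - M x') k ≠ 0} : Finset (Fin L)).card := rfl
      omega
    set s : Finset (Fin L) := {k | (M x - M x') k ≠ 0} with hs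
    obtain ⟨t, hts, htcard⟩ := Finset.exists_subset_card_eq (min_le_left s.card δ)
    have ht1 : t.card ≤ δ := htcard ▸ min_le_right _ _
    have ht2 : (s \ t).card ≤ δ := by
      have := Finset.card_sdiff_of_subset hts
      omega
    set ε : Fin L → F := fun k => if k ∈ t then -(M x - M x') k else 0 with hε
    set ε' : Fin L → F := fun k => if k ∈ s \ t then (M x - M x') k else 0 with hε'
    have hεw : hammingNorm ε ≤ δ := by
      have hsub : ({k | ε k ≠ 0} : Finset (Fin L)) ⊆ t := by
        intro k hk
        rw [Finset.mem_filter] at hk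
        by_contra hkt
        refine hk.2 ?_
        show (if k ∈ t then -(M x - M x') k else 0) = 0
        rw [if_neg hkt]
      exact le_trans (Finset.card_le_card hsub) ht1
    have hε'w : hammingNorm ε' ≤ δ := by
      have hsub : ({k | ε' k ≠ 0} : Finset (Fin L)) ⊆ s \ t := by
        intro k hk
        rw [Finset.mem_filter] at hk
        by_contra hkt
        refine hk.2 ?_
        show (if k ∈ s \ t then (M x - M x') k else 0) = 0
        rw [if_neg hkt]
      exact le_trans (Finset.card_le_card hsub) ht2
    have heq : M x + ε = M x' + ε' := by
      funext k
      show M x k + (if k ∈ t then -(M x - M x') k else 0)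
        = M x' k + (if k ∈ s \ t then (M x - M x') k else 0)
      by_cases hkt : k ∈ t
      · have hns : k ∉ s \ t := fun h => (Finset.mem_sdiff.mp h).2 hkt
        rw [if_pos hkt, if_neg hns]
        simp only [Pi.sub_apply]
        ring
      · by_cases hks : k ∈ s
        · have hins : k ∈ s \ t := Finset.mem_sdiff.mpr ⟨hks, hkt⟩
          rw [if_neg hkt, if_pos hins]
          simp only [Pi.sub_apply]
          ring
        · have hns : k ∉ s \ t := fun h => hks (Finset.mem_sdiff.mp h).1
          rw [if_neg hkt, if_neg hns]
          have hk0 : (M x - M x') k = 0 := by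
            by_contra h
            exact hks (by
              simp only [hs, Finset.mem_filter, Finset.mem_univ, true_and]
              exact h)
          simp only [Pi.sub_apply] at hk0
          simp [sub_eq_zero.mp hk0]
    have h1 := hD i x ε hεw
    have h2 := hD i x' ε' hε'w
    have hHe : (fun j => H i j x) = fun j => H i j x' := funext hH
    rw [heq, hHe, h2] at h1
    exact hW (congrFun h1 l).symm
  · intro hc
    classical
    refine ⟨fun i y h =>
      if hx : ∃ x, hammingNorm (y - M x) ≤ δ ∧ (fun j => H i j x) = h
      then fun l => W i l hx.choose else fun _ _ => 0, ?_⟩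
    intro i x ε hε
    have hx : ∃ z, hammingNorm ((M x + ε) - M z) ≤ δ ∧
        (fun j => H i j z) = (fun j => H i j x) :=
      ⟨x, by simpa using hε, rfl⟩
    simp only [hx, dif_pos]
    obtain ⟨hz1, hz2⟩ := hx.choose_spec
    set z := hx.choose
    funext l
    by_cases hzx : z = x
    · rw [hzx]
    · by_contra hWne
      have hconf : 2 * δ + 1 ≤ hammingNorm (M z - M x) :=
        hc z x hzx ⟨i, fun j => congrFun hz2 j, l, hWne⟩
      have hle : hammingNorm (M z - M x) ≤ 2 * δ := by
        have h1 : hammingDist (M z) (M x) ≤ hammingDist (M z) (M x + ε) + hammingDist (M x + ε) (M x) :=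
          hammingDist_triangle _ _ _
        rw [hammingDist_comm, hammingDist_eq_hammingNorm, neg_add_eq_sub] at h1
        have e1 : hammingDist (M z) (M x + ε) = hammingNorm ((M x + ε) - M z) := by
          rw [hammingDist_eq_hammingNorm, neg_add_eq_sub]
        have e2 : hammingDist (M x + ε) (M x) = hammingNorm ε := by
          rw [hammingDist_comm, hammingDist_eq_hammingNorm]; congr 1; ring
        rw [e1, e2] at h1
        omega
      omega
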